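/- arXiv:2303.05755 — 2 statements merged into one kernel-verified Lean document; each statement's English description precedes it below -/
import Mathlib

section
/- Suppose G_{α₀} is μ-strongly convex for some α₀ > 0 and μ > 0, each f_k is L-smooth, and C₁ > 0 satisfies ‖∇F(𝐱_*^β + s(𝐱_*^α − 𝐱_*^β))‖ ≤ C₁ for all s ∈ [0,1], α, β ∈ (0, α₀]. Let {α(t)} be positive stepsizes with α(t) ≤ min{(1+λ_m(W))/L, α₀} for all t, and let 𝐱(t+1) = 𝐱(t) − ∇G_{α(t)}(𝐱(t)). Then for every t, ‖𝐱(t+1) − 𝐱_*^{α(t+1)}‖ ≤ ‖𝐱(t) − 𝐱_*^{α(t)}‖ + (2α₀C₁/(μ α(t))) |α(t+1) − α(t)|. -/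
open Finset Set
open scoped RealInnerProductSpace

noncomputable section

/-- The quadratic penalty `(1/2) 𝐱ᵀ (I − W ⊗ I_n) 𝐱` on the stacked space `ℝ^{nm}`,
where `𝐱 = (x_1, …, x_m)` is indexed by pairs `(k, i)`. -/
def stackedQuad (m n : ℕ) (W : Matrix (Fin m) (Fin m) ℝ)
    (x : EuclideanSpace ℝ (Fin m × Fin n)) : ℝ :=
  (1 / 2) * (‖x‖ ^ 2 - ∑ k : Fin m, ∑ j : Fin m, W k j * ∑ i : Fin n, x (k, i) * x (j, i))

/-- `F(𝐱) = (1/m) ∑ₖ f_k(x_k)` on the stacked space `ℝ^{nm}`. -/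
def stackedF (m n : ℕ) (f : Fin m → EuclideanSpace ℝ (Fin n) → ℝ)
    (x : EuclideanSpace ℝ (Fin m × Fin n)) : ℝ :=
  (1 / (m : ℝ)) * ∑ k : Fin m, f k (WithLp.toLp 2 (fun i => x (k, i)))

/-- `G_α(𝐱) = α F(𝐱) + (1/2) 𝐱ᵀ (I − W ⊗ I_n) 𝐱`. -/
def DGDG (m n : ℕ) (W : Matrix (Fin m) (Fin m) ℝ)
    (f : Fin m → EuclideanSpace ℝ (Fin n) → ℝ) (α : ℝ)
    (x : EuclideanSpace ℝ (Fin m × Fin n)) : ℝ :=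
  α * stackedF m n f x + stackedQuad m n W x

/-- `g` is `μ`-strongly convex: `g − (μ/2)‖·‖²` is convex. -/
def StrongConvexWith {E : Type*} [NormedAddCommGroup E] [InnerProductSpace ℝ E]
    (μ : ℝ) (g : E → ℝ) : Prop :=
  ConvexOn ℝ Set.univ (fun x => g x - μ / 2 * ‖x‖ ^ 2)


variable {E : Type*} [NormedAddCommGroup E] [InnerProductSpace ℝ E] [CompleteSpace E]

lemma myLineDeriv (h : E → ℝ) (H : E → E) (hg : ∀ z, HasGradientAt h (H z) z) (x v : E) (t : ℝ) :
    HasDerivAt (fun t : ℝ => h (x + t • v)) ⟪H (x + t • v), v⟫ t := by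
  have hline : HasDerivAt (fun t : ℝ => x + t • v) v t := by
    simpa using ((hasDerivAt_id t).smul_const v).const_add x
  simpa [InnerProductSpace.toDual_apply_apply, Function.comp_def] using
    (hg (x + t • v)).hasFDerivAt.comp_hasDerivAt t hline

lemma subgrad_of_convex {h : E → ℝ} {H : E → E} (hconv : ConvexOn ℝ Set.univ h)
    (hg : ∀ z, HasGradientAt h (H z) z) (x y : E) :
    h x + ⟪H x, y - x⟫ ≤ h y := by
  set v := y - x with hv
  set φ : ℝ → ℝ := fun t => h (x + t • v) with hφ
  have hφ0 : φ 0 = h x := by simp [hφ]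
  have hφ1 : φ 1 = h y := by simp [hφ, hv]
  have hder : HasDerivAt φ ⟪H x, v⟫ 0 := by
    simpa using myLineDeriv h H hg x v 0
  have hslope : ∀ t ∈ Ioo (0:ℝ) 1, slope φ 0 t ≤ φ 1 - φ 0 := by
    intro t ht
    have hcc : h ((1-t) • x + t • y) ≤ (1-t) * h x + t * h y :=
      hconv.2 (mem_univ x) (mem_univ y) (by linarith [ht.2]) (le_of_lt ht.1) (by ring)
    have hpt : (1 - t) • x + t • y = x + t • v := by rw [hv]; module
    rw [hpt] at hcc
    rw [slope_def_field, sub_zero, div_le_iff₀ ht.1]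
    have hφt : φ t ≤ (1-t) * φ 0 + t * φ 1 := by rw [hφ0, hφ1]; exact hcc
    nlinarith [ht.1]
  have htend : Filter.Tendsto (slope φ 0) (nhdsWithin 0 (Ioo (0:ℝ) 1)) (nhds ⟪H x, v⟫) :=
    (hasDerivAt_iff_tendsto_slope.1 hder).mono_left
      (nhdsWithin_mono 0 (fun t ht => ne_of_gt ht.1))
  have hne : (nhdsWithin (0:ℝ) (Ioo 0 1)).NeBot :=
    IsGLB.nhdsWithin_neBot (isGLB_Ioo one_pos) (nonempty_Ioo.2 one_pos)
  have hle : ⟪H x, v⟫ ≤ φ 1 - φ 0 :=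
    le_of_tendsto htend (Filter.eventually_inf_principal.2 (Filter.Eventually.of_forall hslope))
  rw [hφ0, hφ1] at hle; linarith

lemma descent_of_lipschitz {h : E → ℝ} {H : E → E} {K : ℝ}
    (hg : ∀ z, HasGradientAt h (H z) z)
    (hlip : ∀ z w, ‖H z - H w‖ ≤ K * ‖z - w‖) (x y : E) :
    h y ≤ h x + ⟪H x, y - x⟫ + K / 2 * ‖y - x‖ ^ 2 := by
  set v := y - x with hv
  set ψ : ℝ → ℝ := fun t => h (x + t • v) - t * ⟪H x, v⟫ - K / 2 * ‖v‖ ^ 2 * t ^ 2 with hψ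
  have hder : ∀ t : ℝ, HasDerivAt ψ
      (⟪H (x + t • v), v⟫ - ⟪H x, v⟫ - K * ‖v‖ ^ 2 * t) t := by
    intro t
    have h1 := myLineDeriv h H hg x v t
    have h2 : HasDerivAt (fun t : ℝ => t * ⟪H x, v⟫) ⟪H x, v⟫ t := by
      simpa using (hasDerivAt_id t).mul_const ⟪H x, v⟫
    have h3 : HasDerivAt (fun t : ℝ => K / 2 * ‖v‖ ^ 2 * t ^ 2) (K * ‖v‖ ^ 2 * t) t := by
      have := (hasDerivAt_pow 2 t).const_mul (K / 2 * ‖v‖ ^ 2)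
      exact this.congr_deriv (by norm_num; ring)
    exact (h1.sub h2).sub h3
  have hanti : AntitoneOn ψ (Icc (0:ℝ) 1) := by
    apply antitoneOn_of_deriv_nonpos (convex_Icc 0 1)
    · exact (Differentiable.continuous (fun t => (hder t).differentiableAt)).continuousOn
    · intro t ht
      exact (hder t).differentiableAt.differentiableWithinAt
    · intro t ht
      rw [interior_Icc] at ht
      rw [(hder t).deriv]
      have hcs : ⟪H (x + t • v) - H x, v⟫ ≤ ‖H (x + t • v) - H x‖ * ‖v‖ :=
        real_inner_le_norm _ _
      have hl : ‖H (x + t • v) - H x‖ ≤ K * (t * ‖v‖) := by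
        have := hlip (x + t • v) x
        simpa [norm_smul, abs_of_pos ht.1] using this
      have hinner : ⟪H (x + t • v), v⟫ - ⟪H x, v⟫ = ⟪H (x + t • v) - H x, v⟫ :=
        (inner_sub_left _ _ _).symm
      rw [hinner]
      nlinarith [norm_nonneg v, norm_nonneg (H (x + t • v) - H x), ht.1]
  have h01 := hanti (left_mem_Icc.2 zero_le_one) (right_mem_Icc.2 zero_le_one) zero_le_one
  have e0 : ψ 0 = h x := by simp [hψ]
  have e1 : ψ 1 = h y - ⟪H x, v⟫ - K / 2 * ‖v‖ ^ 2 := by simp [hψ, hv]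
  rw [e0, e1] at h01
  linarith

lemma cocoercive_of_descent {g : E → ℝ} {G : E → E}
    (hsub : ∀ x y, g x + ⟪G x, y - x⟫ ≤ g y)
    (hdes : ∀ x y, g y ≤ g x + ⟪G x, y - x⟫ + ‖y - x‖ ^ 2) (x y : E) :
    1 / 2 * ‖G x - G y‖ ^ 2 ≤ ⟪G x - G y, x - y⟫ := by
  have key : ∀ p q : E, g q + ⟪G q, p - q⟫ + 1 / 4 * ‖G p - G q‖ ^ 2 ≤ g p := by
    intro p q
    set d := G p - G q with hd
    set z := p - (2⁻¹ : ℝ) • d with hz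
    have h1 := hdes p z
    have h2 := hsub q z
    have hzp : z - p = -((2⁻¹ : ℝ) • d) := by rw [hz]; abel
    have hzq : z - q = (p - q) - (2⁻¹ : ℝ) • d := by rw [hz]; abel
    rw [hzp] at h1
    rw [hzq] at h2
    have e1 : ⟪G p, -((2⁻¹ : ℝ) • d)⟫ = -(2⁻¹) * ⟪G p, d⟫ := by
      rw [inner_neg_right, real_inner_smul_right]; ring
    have e2 : ‖-((2⁻¹ : ℝ) • d)‖ ^ 2 = 4⁻¹ * ‖d‖ ^ 2 := by
      rw [norm_neg, norm_smul]
      norm_num [mul_pow]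
    have e3 : ⟪G q, p - q - (2⁻¹ : ℝ) • d⟫ = ⟪G q, p - q⟫ - 2⁻¹ * ⟪G q, d⟫ := by
      rw [inner_sub_right, real_inner_smul_right]
    have e4 : ⟪G p, d⟫ - ⟪G q, d⟫ = ‖d‖ ^ 2 := by
      rw [← inner_sub_left, ← hd, real_inner_self_eq_norm_sq]
    rw [e1, e2] at h1
    rw [e3] at h2
    linarith
  have k1 := key x y
  have k2 := key y x
  have e6 : ⟪G x - G y, x - y⟫ = ⟪G x, x - y⟫ - ⟪G y, x - y⟫ := inner_sub_left _ _ _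
  have e7 : ⟪G x, y - x⟫ = -⟪G x, x - y⟫ := by
    rw [← inner_neg_right]; congr 1; abel
  have e5 : ⟪G y, x - y⟫ = -⟪G y, y - x⟫ := by
    rw [← inner_neg_right]; congr 1; abel
  have e8 : ‖G y - G x‖ = ‖G x - G y‖ := norm_sub_rev _ _
  rw [e8] at k2
  rw [e7] at k2
  rw [e6, e5]
  linarith

lemma hasGradientAt_of_quadratic {q : E → ℝ} {B : E → E} {C : ℝ}
    (hexp : ∀ z v, q (z + v) = q z + ⟪B z, v⟫ + q v)
    (hbound : ∀ v, |q v| ≤ C * ‖v‖ ^ 2) (z : E) :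
    HasGradientAt q (B z) z := by
  rw [hasGradientAt_iff_isLittleO]
  have heq : ∀ x' : E, q x' - q z - ⟪B z, x' - z⟫ = q (x' - z) := by
    intro x'
    have := hexp z (x' - z)
    simp only [add_sub_cancel] at this
    rw [this]; ring
  have hC : (fun x' : E => q (x' - z)) =o[nhds z] fun x' => x' - z := by
    rw [Asymptotics.isLittleO_iff]
    intro c hc
    have htend : Filter.Tendsto (fun x' : E => x') (nhds z) (nhds z) := Filter.tendsto_id
    have hsmall : ∀ᶠ x' in nhds z, ‖x' - z‖ < c / (|C| + 1) := by
      have : Filter.Tendsto (fun x' : E => ‖x' - z‖) (nhds z) (nhds 0) := by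
        have : Filter.Tendsto (fun x' : E => x' - z) (nhds z) (nhds (z - z)) :=
          Filter.Tendsto.sub_const htend z
        rw [sub_self] at this
        simpa using this.norm
      exact this.eventually_lt_const (by positivity)
    filter_upwards [hsmall] with x' hx'
    have h1 : |q (x' - z)| ≤ C * ‖x' - z‖ ^ 2 := hbound _
    have h2 : C * ‖x' - z‖ ^ 2 ≤ (|C| + 1) * (‖x' - z‖ * ‖x' - z‖) := by
      have := abs_nonneg C
      nlinarith [norm_nonneg (x' - z), le_abs_self C]
    have h3 : (|C| + 1) * ‖x' - z‖ ≤ c := by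
      have h4 : (0:ℝ) < |C| + 1 := by positivity
      rw [mul_comm]
      calc ‖x' - z‖ * (|C| + 1) ≤ (c / (|C| + 1)) * (|C| + 1) := by
            apply mul_le_mul_of_nonneg_right (le_of_lt hx') (le_of_lt h4)
        _ = c := by field_simp
    calc ‖q (x' - z)‖ = |q (x' - z)| := rfl
      _ ≤ (|C| + 1) * (‖x' - z‖ * ‖x' - z‖) := le_trans h1 h2
      _ = ((|C| + 1) * ‖x' - z‖) * ‖x' - z‖ := by ring
      _ ≤ c * ‖x' - z‖ := by
          apply mul_le_mul_of_nonneg_right h3 (norm_nonneg _)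
  have : (fun x' => q x' - q z - ⟪B z, x' - z⟫) =o[nhds z] fun x' => x' - z := by
    apply hC.congr' ?_ (by rfl)
    filter_upwards with x'
    rw [heq x']
  exact this


section Concrete
open Finset
variable {m n : ℕ} (W : Matrix (Fin m) (Fin m) ℝ)

/-- The operator `W ⊗ I_n` acting on the stacked space. -/
def Aop (x : EuclideanSpace ℝ (Fin m × Fin n)) : EuclideanSpace ℝ (Fin m × Fin n) :=
  WithLp.toLp 2 (fun p : Fin m × Fin n => ∑ j, W p.1 j * x (j, p.2))

lemma inner_eq (v w : EuclideanSpace ℝ (Fin m × Fin n)) :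
    ⟪v, w⟫ = ∑ k : Fin m, ∑ i : Fin n, v (k, i) * w (k, i) := by
  simp [PiLp.inner_apply, RCLike.inner_apply, Fintype.sum_prod_type, mul_comm]

lemma normsq_eq (v : EuclideanSpace ℝ (Fin m × Fin n)) :
    ‖v‖ ^ 2 = ∑ k : Fin m, ∑ i : Fin n, v (k, i) ^ 2 := by
  rw [← real_inner_self_eq_norm_sq, inner_eq]
  simp [sq]

lemma normsq_eq' (v : EuclideanSpace ℝ (Fin n)) : ‖v‖ ^ 2 = ∑ i : Fin n, v i ^ 2 := by
  rw [← real_inner_self_eq_norm_sq, PiLp.inner_apply]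
  simp [RCLike.inner_apply, sq]

lemma inner_Aop (v w : EuclideanSpace ℝ (Fin m × Fin n)) :
    ⟪v, Aop W w⟫ = ∑ k : Fin m, ∑ j : Fin m, W k j * ∑ i : Fin n, v (k, i) * w (j, i) := by
  rw [inner_eq]
  apply Finset.sum_congr rfl
  intro k _
  have h0 : ∀ i : Fin n, (Aop W w) (k, i) = ∑ j, W k j * w (j, i) := fun i => rfl
  simp only [h0, Finset.mul_sum]
  rw [Finset.sum_comm]
  exact Finset.sum_congr rfl fun j _ => Finset.sum_congr rfl fun i _ => by ring

lemma quad_eq (x : EuclideanSpace ℝ (Fin m × Fin n)) :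
    stackedQuad m n W x = 1 / 2 * (‖x‖ ^ 2 - ⟪x, Aop W x⟫) := by
  rw [stackedQuad, inner_Aop]

lemma Aop_add (z v : EuclideanSpace ℝ (Fin m × Fin n)) :
    Aop W (z + v) = Aop W z + Aop W v := by
  ext p
  show ∑ j, W p.1 j * (z (j, p.2) + v (j, p.2)) = (∑ j, W p.1 j * z (j, p.2)) + ∑ j, W p.1 j * v (j, p.2)
  rw [← Finset.sum_add_distrib]
  exact Finset.sum_congr rfl fun j _ => by ring

lemma inner_Aop_symm (hWsymm : W.IsSymm) (v w : EuclideanSpace ℝ (Fin m × Fin n)) :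
    ⟪v, Aop W w⟫ = ⟪w, Aop W v⟫ := by
  rw [inner_Aop, inner_Aop, Finset.sum_comm]
  apply Finset.sum_congr rfl; intro k _
  apply Finset.sum_congr rfl; intro j _
  rw [hWsymm.apply k j]
  congr 1
  exact Finset.sum_congr rfl fun i _ => by ring

lemma quad_expand (hWsymm : W.IsSymm) (z v : EuclideanSpace ℝ (Fin m × Fin n)) :
    stackedQuad m n W (z + v)
      = stackedQuad m n W z + ⟪z - Aop W z, v⟫ + stackedQuad m n W v := by
  rw [quad_eq, quad_eq, quad_eq, Aop_add]
  have h1 : ‖z + v‖ ^ 2 = ‖z‖ ^ 2 + 2 * ⟪z, v⟫ + ‖v‖ ^ 2 := norm_add_sq_real z v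
  have h2 : ⟪z + v, Aop W z + Aop W v⟫
      = ⟪z, Aop W z⟫ + ⟪z, Aop W v⟫ + ⟪v, Aop W z⟫ + ⟪v, Aop W v⟫ := by
    rw [inner_add_left, inner_add_right, inner_add_right]; ring
  have h3 : ⟪z, Aop W v⟫ = ⟪v, Aop W z⟫ := inner_Aop_symm W hWsymm z v
  have h4 : ⟪z - Aop W z, v⟫ = ⟪z, v⟫ - ⟪v, Aop W z⟫ := by
    rw [inner_sub_left, real_inner_comm (Aop W z) v]
  rw [h1, h2, h3, h4]
  ring

lemma Aop_bound (hWsymm : W.IsSymm) (hWnonneg : ∀ i j, 0 ≤ W i j)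
    (hWrow : ∀ i, ∑ j, W i j = 1) (v : EuclideanSpace ℝ (Fin m × Fin n)) :
    ⟪v, Aop W v⟫ ≤ ‖v‖ ^ 2 := by
  rw [inner_Aop, normsq_eq]
  have hcol : ∀ j, ∑ k, W k j = 1 := by
    intro j
    calc ∑ k, W k j = ∑ k, W j k := Finset.sum_congr rfl fun k _ => hWsymm.apply j k
      _ = 1 := hWrow j
  set a : Fin m → ℝ := fun k => ∑ i, v (k, i) ^ 2 with ha
  have step : ∀ k j, W k j * ∑ i, v (k, i) * v (j, i) ≤ W k j * (a k / 2 + a j / 2) := by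
    intro k j
    apply mul_le_mul_of_nonneg_left _ (hWnonneg k j)
    have hpt : ∀ i : Fin n, v (k, i) * v (j, i) ≤ v (k, i) ^ 2 / 2 + v (j, i) ^ 2 / 2 :=
      fun i => by nlinarith [sq_nonneg (v (k, i) - v (j, i))]
    calc ∑ i, v (k, i) * v (j, i) ≤ ∑ i, (v (k, i) ^ 2 / 2 + v (j, i) ^ 2 / 2) :=
          Finset.sum_le_sum fun i _ => hpt i
      _ = a k / 2 + a j / 2 := by
          rw [ha, Finset.sum_add_distrib, ← Finset.sum_div, ← Finset.sum_div]
  calc ∑ k, ∑ j, W k j * ∑ i, v (k, i) * v (j, i)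
      ≤ ∑ k, ∑ j, W k j * (a k / 2 + a j / 2) :=
        Finset.sum_le_sum fun k _ => Finset.sum_le_sum fun j _ => step k j
    _ = (∑ k, ∑ j, W k j * (a k / 2)) + ∑ k, ∑ j, W k j * (a j / 2) := by
        rw [← Finset.sum_add_distrib]
        apply Finset.sum_congr rfl; intro k _
        rw [← Finset.sum_add_distrib]
        exact Finset.sum_congr rfl fun j _ => by ring
    _ = (∑ k, a k / 2) + ∑ j, a j / 2 := by
        congr 1
        · apply Finset.sum_congr rfl; intro k _
          rw [← Finset.sum_mul, hWrow k, one_mul]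
        · rw [Finset.sum_comm]
          apply Finset.sum_congr rfl; intro j _
          rw [← Finset.sum_mul, hcol j, one_mul]
    _ = ∑ k, a k := by
        rw [← Finset.sum_add_distrib]
        exact Finset.sum_congr rfl fun k _ => by ring

lemma quad_nonneg (hWsymm : W.IsSymm) (hWnonneg : ∀ i j, 0 ≤ W i j)
    (hWrow : ∀ i, ∑ j, W i j = 1) (v : EuclideanSpace ℝ (Fin m × Fin n)) :
    0 ≤ stackedQuad m n W v := by
  rw [quad_eq]
  have := Aop_bound W hWsymm hWnonneg hWrow v
  linarith

lemma quad_le {lam : ℝ}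
    (hlam : ∀ u : EuclideanSpace ℝ (Fin m × Fin n),
      lam * ‖u‖ ^ 2 ≤ ∑ k : Fin m, ∑ j : Fin m, W k j * ∑ i : Fin n, u (k, i) * u (j, i))
    (v : EuclideanSpace ℝ (Fin m × Fin n)) :
    stackedQuad m n W v ≤ (1 - lam) / 2 * ‖v‖ ^ 2 := by
  rw [quad_eq]
  have h : lam * ‖v‖ ^ 2 ≤ ⟪v, Aop W v⟫ := by rw [inner_Aop]; exact hlam v
  linarith

lemma quad_hasGradient (hWsymm : W.IsSymm) (hWnonneg : ∀ i j, 0 ≤ W i j)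
    (hWrow : ∀ i, ∑ j, W i j = 1) {lam : ℝ}
    (hlam : ∀ u : EuclideanSpace ℝ (Fin m × Fin n),
      lam * ‖u‖ ^ 2 ≤ ∑ k : Fin m, ∑ j : Fin m, W k j * ∑ i : Fin n, u (k, i) * u (j, i))
    (z : EuclideanSpace ℝ (Fin m × Fin n)) :
    HasGradientAt (stackedQuad m n W) (z - Aop W z) z := by
  apply hasGradientAt_of_quadratic (C := (1 + |lam|) / 2) (quad_expand W hWsymm)
  intro v
  rw [abs_of_nonneg (quad_nonneg W hWsymm hWnonneg hWrow v)]
  have h1 := quad_le W hlam v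
  have h2 : -|lam| ≤ lam := neg_abs_le lam
  nlinarith [sq_nonneg ‖v‖]

/-- Projection onto the `k`-th block. -/
def projCLM (m n : ℕ) (k : Fin m) :
    EuclideanSpace ℝ (Fin m × Fin n) →L[ℝ] EuclideanSpace ℝ (Fin n) :=
  LinearMap.toContinuousLinearMap
    { toFun := fun x => WithLp.toLp 2 (fun i => x (k, i))
      map_add' := fun x y => rfl
      map_smul' := fun c x => rfl }

lemma projCLM_apply (k : Fin m) (x : EuclideanSpace ℝ (Fin m × Fin n)) (i : Fin n) :
    projCLM m n k x i = x (k, i) := rfl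

/-- The stacked gradient of the local costs. -/
def stackG (m n : ℕ) (f : Fin m → EuclideanSpace ℝ (Fin n) → ℝ)
    (x : EuclideanSpace ℝ (Fin m × Fin n)) : EuclideanSpace ℝ (Fin m × Fin n) :=
  WithLp.toLp 2 (fun p : Fin m × Fin n => gradient (f p.1) (WithLp.toLp 2 (fun i => x (p.1, i))) p.2)

lemma stackedF_hasGradient (f : Fin m → EuclideanSpace ℝ (Fin n) → ℝ)
    (hdiff : ∀ k, Differentiable ℝ (f k)) (x : EuclideanSpace ℝ (Fin m × Fin n)) :
    HasGradientAt (stackedF m n f) ((1 / (m : ℝ)) • stackG m n f x) x := by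
  have hk : ∀ k : Fin m, HasFDerivAt (fun y : EuclideanSpace ℝ (Fin m × Fin n) => f k (projCLM m n k y))
      (((InnerProductSpace.toDual ℝ (EuclideanSpace ℝ (Fin n)))
          (gradient (f k) (projCLM m n k x))).comp (projCLM m n k)) x := by
    intro k
    exact ((hdiff k (projCLM m n k x)).hasGradientAt.hasFDerivAt).comp x (projCLM m n k).hasFDerivAt
  have hsum := HasFDerivAt.sum (u := Finset.univ) (fun k _ => hk k)
  have hmul := hsum.const_mul (1 / (m : ℝ))
  rw [hasGradientAt_iff_hasFDerivAt]
  have hfun : (stackedF m n f)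
      = fun y => (1 / (m : ℝ)) * ∑ k : Fin m, f k (projCLM m n k y) := rfl
  rw [hfun]
  convert hmul using 1
  · rfl
  · simp only [Finset.sum_apply]
  apply ContinuousLinearMap.ext
  intro v
  simp only [ContinuousLinearMap.smul_apply, ContinuousLinearMap.coe_sum', Finset.sum_apply,
    ContinuousLinearMap.coe_comp', Function.comp_apply, InnerProductSpace.toDual_apply_apply,
    smul_eq_mul]
  rw [real_inner_smul_left, inner_eq]
  congr 1
  refine Finset.sum_congr rfl fun k _ => ?_
  rw [PiLp.inner_apply]
  exact Finset.sum_congr rfl fun i _ => by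
    simp only [RCLike.inner_apply, conj_trivial, stackG, projCLM_apply]; exact mul_comm _ _

lemma stackG_lip (f : Fin m → EuclideanSpace ℝ (Fin n) → ℝ) {L : ℝ} (hL : 0 ≤ L)
    (hsmooth : ∀ k, ∀ x y, ‖gradient (f k) x - gradient (f k) y‖ ≤ L * ‖x - y‖)
    (x y : EuclideanSpace ℝ (Fin m × Fin n)) :
    ‖stackG m n f x - stackG m n f y‖ ≤ L * ‖x - y‖ := by
  have hsq : ‖stackG m n f x - stackG m n f y‖ ^ 2 ≤ (L * ‖x - y‖) ^ 2 := by
    rw [normsq_eq]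
    have hterm : ∀ k : Fin m, ∑ i : Fin n, (stackG m n f x - stackG m n f y) (k, i) ^ 2
        ≤ L ^ 2 * ∑ i : Fin n, (x - y) (k, i) ^ 2 := by
      intro k
      set xk : EuclideanSpace ℝ (Fin n) := WithLp.toLp 2 (fun i => x (k, i)) with hxk
      set yk : EuclideanSpace ℝ (Fin n) := WithLp.toLp 2 (fun i => y (k, i)) with hyk
      have h1 : ∑ i : Fin n, (stackG m n f x - stackG m n f y) (k, i) ^ 2
          = ‖gradient (f k) xk - gradient (f k) yk‖ ^ 2 := by
        rw [normsq_eq']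
        exact Finset.sum_congr rfl fun i _ => rfl
      have h2 : ‖gradient (f k) xk - gradient (f k) yk‖ ≤ L * ‖xk - yk‖ := hsmooth k xk yk
      have h3 : ‖xk - yk‖ ^ 2 = ∑ i : Fin n, (x - y) (k, i) ^ 2 := by
        rw [normsq_eq']
        exact Finset.sum_congr rfl fun i _ => rfl
      have h4 : ‖gradient (f k) xk - gradient (f k) yk‖ ^ 2 ≤ (L * ‖xk - yk‖) ^ 2 := by
        apply pow_le_pow_left₀ (norm_nonneg _) h2
      rw [h1]
      calc ‖gradient (f k) xk - gradient (f k) yk‖ ^ 2 ≤ (L * ‖xk - yk‖) ^ 2 := h4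
        _ = L ^ 2 * ‖xk - yk‖ ^ 2 := by ring
        _ = L ^ 2 * ∑ i : Fin n, (x - y) (k, i) ^ 2 := by rw [h3]
    calc ∑ k : Fin m, ∑ i : Fin n, (stackG m n f x - stackG m n f y) (k, i) ^ 2
        ≤ ∑ k : Fin m, L ^ 2 * ∑ i : Fin n, (x - y) (k, i) ^ 2 :=
          Finset.sum_le_sum fun k _ => hterm k
      _ = L ^ 2 * ∑ k : Fin m, ∑ i : Fin n, (x - y) (k, i) ^ 2 := by rw [Finset.mul_sum]
      _ = (L * ‖x - y‖) ^ 2 := by rw [← normsq_eq]; ring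
  nlinarith [norm_nonneg (stackG m n f x - stackG m n f y),
    mul_nonneg hL (norm_nonneg (x - y))]

end Concrete

section Main
variable {m n : ℕ}

/-- Gradient of `stackedF`. -/
def gradF (m n : ℕ) (f : Fin m → EuclideanSpace ℝ (Fin n) → ℝ)
    (z : EuclideanSpace ℝ (Fin m × Fin n)) : EuclideanSpace ℝ (Fin m × Fin n) :=
  (1 / (m : ℝ)) • stackG m n f z

/-- Gradient of `DGDG`. -/
def gradG (m n : ℕ) (W : Matrix (Fin m) (Fin m) ℝ)
    (f : Fin m → EuclideanSpace ℝ (Fin n) → ℝ) (a : ℝ)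
    (z : EuclideanSpace ℝ (Fin m × Fin n)) : EuclideanSpace ℝ (Fin m × Fin n) :=
  a • gradF m n f z + (z - Aop W z)

variable (W : Matrix (Fin m) (Fin m) ℝ) (f : Fin m → EuclideanSpace ℝ (Fin n) → ℝ)

lemma gradG_hasGradient (hWsymm : W.IsSymm) (hWnonneg : ∀ i j, 0 ≤ W i j)
    (hWrow : ∀ i, ∑ j, W i j = 1) {lam : ℝ}
    (hlam : ∀ u : EuclideanSpace ℝ (Fin m × Fin n),
      lam * ‖u‖ ^ 2 ≤ ∑ k : Fin m, ∑ j : Fin m, W k j * ∑ i : Fin n, u (k, i) * u (j, i))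
    (hdiff : ∀ k, Differentiable ℝ (f k)) (a : ℝ) (z : EuclideanSpace ℝ (Fin m × Fin n)) :
    HasGradientAt (DGDG m n W f a) (gradG m n W f a z) z := by
  have h1 : HasFDerivAt (fun y => a * stackedF m n f y)
      (a • ((InnerProductSpace.toDual ℝ (EuclideanSpace ℝ (Fin m × Fin n))) (gradF m n f z))) z :=
    (stackedF_hasGradient f hdiff z).hasFDerivAt.const_mul a
  have h2 := (quad_hasGradient W hWsymm hWnonneg hWrow hlam z).hasFDerivAt
  have h3 := h1.add h2
  have h4 : (InnerProductSpace.toDual ℝ (EuclideanSpace ℝ (Fin m × Fin n))) (gradG m n W f a z)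
      = a • ((InnerProductSpace.toDual ℝ (EuclideanSpace ℝ (Fin m × Fin n))) (gradF m n f z))
        + (InnerProductSpace.toDual ℝ (EuclideanSpace ℝ (Fin m × Fin n))) (z - Aop W z) := by
    rw [gradG, map_add]
    congr 1
    rw [map_smul]
  rw [hasGradientAt_iff_hasFDerivAt, h4]
  exact h3

end Main

set_option maxHeartbeats 1000000 in
/-- **Lemma 3.1.** Under strong convexity of `G_{α₀}`, `L`-smoothness of the
local costs, and stepsizes `α(t) ≤ min{(1+λ_m(W))/L, α₀}`, the DGD iterates satisfy
`‖𝐱(t+1) − 𝐱_*^{α(t+1)}‖ ≤ ‖𝐱(t) − 𝐱_*^{α(t)}‖ + (2α₀C₁/(μα(t)))|α(t+1) − α(t)|`. -/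
theorem dgd_one_step_tracking {m n : ℕ} (hm : 1 ≤ m) (hn : 1 ≤ n)
    (W : Matrix (Fin m) (Fin m) ℝ)
    (hWsymm : W.IsSymm)
    (hWnonneg : ∀ i j, 0 ≤ W i j)
    (hWrow : ∀ i, ∑ j, W i j = 1)
    (hWdiag : ∀ i, 0 < W i i)
    (f : Fin m → EuclideanSpace ℝ (Fin n) → ℝ)
    (hdiff : ∀ k, Differentiable ℝ (f k))
    (L : ℝ) (hL : 0 < L)
    (hsmooth : ∀ k, ∀ x y, ‖gradient (f k) x - gradient (f k) y‖ ≤ L * ‖x - y‖)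
    (lam : ℝ) (hlam_gt : -1 < lam)
    (hlam : ∀ u : EuclideanSpace ℝ (Fin m × Fin n),
      lam * ‖u‖ ^ 2 ≤ ∑ k : Fin m, ∑ j : Fin m, W k j * ∑ i : Fin n, u (k, i) * u (j, i))
    (μ α₀ : ℝ) (hμ : 0 < μ) (hα₀ : 0 < α₀)
    (hGsc : StrongConvexWith μ (DGDG m n W f α₀))
    (xstar : ℝ → EuclideanSpace ℝ (Fin m × Fin n))
    (hmin : ∀ a ∈ Set.Ioc (0 : ℝ) α₀, ∀ y, DGDG m n W f a (xstar a) ≤ DGDG m n W f a y)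
    (C₁ : ℝ) (hC₁pos : 0 < C₁)
    (hC₁ : ∀ s ∈ Set.Icc (0 : ℝ) 1, ∀ a ∈ Set.Ioc (0 : ℝ) α₀, ∀ b ∈ Set.Ioc (0 : ℝ) α₀,
      ‖gradient (stackedF m n f) (xstar b + s • (xstar a - xstar b))‖ ≤ C₁)
    (α : ℕ → ℝ) (hαpos : ∀ t, 0 < α t)
    (hαle : ∀ t, α t ≤ min ((1 + lam) / L) α₀)
    (x : ℕ → EuclideanSpace ℝ (Fin m × Fin n))
    (hiter : ∀ t, x (t + 1) = x t - gradient (DGDG m n W f (α t)) (x t)) :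
    ∀ t, ‖x (t + 1) - xstar (α (t + 1))‖
      ≤ ‖x t - xstar (α t)‖ + (2 * α₀ * C₁ / (μ * α t)) * |α (t + 1) - α t| := by
  have hm0 : (0 : ℝ) < m := by exact_mod_cast Nat.lt_of_lt_of_le Nat.zero_lt_one hm
  have hm1 : (1 : ℝ) ≤ m := by exact_mod_cast hm
  -- gradient facts
  have hF : ∀ z, HasGradientAt (stackedF m n f) (gradF m n f z) z :=
    fun z => stackedF_hasGradient f hdiff z
  have hG : ∀ (a : ℝ) z, HasGradientAt (DGDG m n W f a) (gradG m n W f a z) z :=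
    fun a z => gradG_hasGradient W f hWsymm hWnonneg hWrow hlam hdiff a z
  have hGrad : ∀ (a : ℝ) z, gradient (DGDG m n W f a) z = gradG m n W f a z :=
    fun a z => (hG a z).gradient
  have hGradF : ∀ z, gradient (stackedF m n f) z = gradF m n f z := fun z => (hF z).gradient
  -- Lipschitz bound for gradF
  have hgFlip : ∀ z w, ‖gradF m n f z - gradF m n f w‖ ≤ L / m * ‖z - w‖ := by
    intro z w
    have h1 : gradF m n f z - gradF m n f w
        = (1 / (m : ℝ)) • (stackG m n f z - stackG m n f w) := by
      rw [gradF, gradF, smul_sub]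
    rw [h1, norm_smul]
    have h2 := stackG_lip f hL.le hsmooth z w
    have h3 : ‖(1 / (m : ℝ))‖ = 1 / (m : ℝ) := by
      rw [Real.norm_eq_abs, abs_of_pos (by positivity)]
    rw [h3]
    calc 1 / (m : ℝ) * ‖stackG m n f z - stackG m n f w‖
        ≤ 1 / (m : ℝ) * (L * ‖z - w‖) := by
          apply mul_le_mul_of_nonneg_left h2 (by positivity)
      _ = L / m * ‖z - w‖ := by ring
  -- descent lemma for stackedF
  have hFdes : ∀ z w, stackedF m n f w
      ≤ stackedF m n f z + ⟪gradF m n f z, w - z⟫ + (L / m) / 2 * ‖w - z‖ ^ 2 :=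
    descent_of_lipschitz hF hgFlip
  -- subgradient inequality for the quadratic
  have hQsub : ∀ z w : EuclideanSpace ℝ (Fin m × Fin n),
      stackedQuad m n W z + ⟪z - Aop W z, w - z⟫ ≤ stackedQuad m n W w := by
    intro z w
    have h1 := quad_expand W hWsymm z (w - z)
    rw [add_sub_cancel] at h1
    have h2 := quad_nonneg W hWsymm hWnonneg hWrow (w - z)
    linarith
  -- strong subgradient inequality for G_{α₀}
  have hstrong0 : ∀ z w, DGDG m n W f α₀ z + ⟪gradG m n W f α₀ z, w - z⟫
      + μ / 2 * ‖w - z‖ ^ 2 ≤ DGDG m n W f α₀ w := by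
    intro z w
    have hnsq : ∀ z : EuclideanSpace ℝ (Fin m × Fin n),
        HasGradientAt (fun y : EuclideanSpace ℝ (Fin m × Fin n) => μ / 2 * ‖y‖ ^ 2) (μ • z) z := by
      apply hasGradientAt_of_quadratic (C := |μ| / 2)
      · intro z v
        rw [norm_add_sq_real, real_inner_smul_left]
        ring
      · intro v
        rw [abs_mul, abs_div]
        have : |‖v‖ ^ 2| = ‖v‖ ^ 2 := abs_of_nonneg (sq_nonneg _)
        rw [this]
        norm_num
    have hH : ∀ z, HasGradientAt (fun y => DGDG m n W f α₀ y - μ / 2 * ‖y‖ ^ 2)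
        (gradG m n W f α₀ z - μ • z) z := by
      intro z
      have h1 := (hG α₀ z).hasFDerivAt.sub (hnsq z).hasFDerivAt
      rw [hasGradientAt_iff_hasFDerivAt, map_sub]
      exact h1
    have hsub0 := subgrad_of_convex hGsc hH z w
    have hin : ⟪gradG m n W f α₀ z - μ • z, w - z⟫
        = ⟪gradG m n W f α₀ z, w - z⟫ - μ * ⟪z, w - z⟫ := by
      rw [inner_sub_left, real_inner_smul_left]
    have hid : μ / 2 * ‖w‖ ^ 2 - μ / 2 * ‖z‖ ^ 2 - μ * ⟪z, w - z⟫ = μ / 2 * ‖w - z‖ ^ 2 := by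
      rw [norm_sub_sq_real, inner_sub_right, real_inner_self_eq_norm_sq, real_inner_comm]
      ring
    rw [hin] at hsub0
    linarith
  -- strong subgradient inequality for G_a, a ∈ (0, α₀]
  have hsubG : ∀ a, 0 < a → a ≤ α₀ → ∀ z w,
      DGDG m n W f a z + ⟪gradG m n W f a z, w - z⟫
        + (μ * a / α₀) / 2 * ‖w - z‖ ^ 2 ≤ DGDG m n W f a w := by
    intro a ha0 haα z w
    set c := a / α₀ with hc
    have hc0 : 0 ≤ c := by positivity
    have hc1 : c ≤ 1 := by rw [hc, div_le_one hα₀]; exact haα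
    have hval : ∀ y, DGDG m n W f a y
        = c * DGDG m n W f α₀ y + (1 - c) * stackedQuad m n W y := by
      intro y
      rw [DGDG, DGDG, hc]
      field_simp
      ring
    have hvec : gradG m n W f a z = c • gradG m n W f α₀ z + (1 - c) • (z - Aop W z) := by
      rw [gradG, gradG]
      have hac : a = c * α₀ := by rw [hc]; field_simp
      rw [hac]
      module
    have h1 := hstrong0 z w
    have h2 := hQsub z w
    have hin : ⟪gradG m n W f a z, w - z⟫
        = c * ⟪gradG m n W f α₀ z, w - z⟫ + (1 - c) * ⟪z - Aop W z, w - z⟫ := by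
      rw [hvec, inner_add_left, real_inner_smul_left, real_inner_smul_left]
    have hcoef : μ * a / α₀ / 2 * ‖w - z‖ ^ 2 = c * (μ / 2 * ‖w - z‖ ^ 2) := by
      rw [hc]; ring
    rw [hval z, hval w, hin, hcoef]
    nlinarith [mul_le_mul_of_nonneg_left h1 hc0,
      mul_le_mul_of_nonneg_left h2 (by linarith : (0:ℝ) ≤ 1 - c)]
  -- descent for G_a with constant 2
  have hdesG : ∀ a, 0 < a → a * L ≤ 1 + lam → ∀ z w,
      DGDG m n W f a w ≤ DGDG m n W f a z + ⟪gradG m n W f a z, w - z⟫ + ‖w - z‖ ^ 2 := by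
    intro a ha0 haL z w
    have h1 := hFdes z w
    have h2 := quad_expand W hWsymm z (w - z)
    rw [add_sub_cancel] at h2
    have h3 := quad_le W hlam (w - z)
    have hin : ⟪gradG m n W f a z, w - z⟫
        = a * ⟪gradF m n f z, w - z⟫ + ⟪z - Aop W z, w - z⟫ := by
      rw [gradG, inner_add_left, real_inner_smul_left]
    have hcoef : a * (L / m) ≤ 1 + lam := by
      have hdm : L / m ≤ L := div_le_self hL.le hm1
      calc a * (L / m) ≤ a * L := mul_le_mul_of_nonneg_left hdm ha0.le
        _ ≤ 1 + lam := haL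
    have haF := mul_le_mul_of_nonneg_left h1 ha0.le
    rw [DGDG, DGDG, hin]
    nlinarith [sq_nonneg ‖w - z‖]
  -- minimizers have zero gradient
  have hminz : ∀ a ∈ Set.Ioc (0:ℝ) α₀, gradG m n W f a (xstar a) = 0 := by
    intro a ha
    have hloc : IsLocalMin (DGDG m n W f a) (xstar a) :=
      Filter.Eventually.of_forall (fun y => hmin a ha y)
    have hfd := hloc.fderiv_eq_zero
    have h1 := (hG a (xstar a)).hasFDerivAt.fderiv
    rw [hfd] at h1
    have h2 := congrArg (InnerProductSpace.toDual ℝ (EuclideanSpace ℝ (Fin m × Fin n))).symm h1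
    simpa using h2.symm
  -- bound on gradF at minimizers
  have hgFC : ∀ b ∈ Set.Ioc (0:ℝ) α₀, ‖gradF m n f (xstar b)‖ ≤ C₁ := by
    intro b hb
    have := hC₁ 0 (Set.left_mem_Icc.2 zero_le_one) b hb b hb
    simpa [hGradF] using this
  intro t
  set a := α t with ha
  set b := α (t + 1) with hb
  have haIoc : a ∈ Set.Ioc (0:ℝ) α₀ := ⟨hαpos t, le_trans (hαle t) (min_le_right _ _)⟩
  have hbIoc : b ∈ Set.Ioc (0:ℝ) α₀ := ⟨hαpos (t+1), le_trans (hαle (t+1)) (min_le_right _ _)⟩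
  have haL : a * L ≤ 1 + lam := by
    have h1 : a ≤ (1 + lam) / L := le_trans (hαle t) (min_le_left _ _)
    calc a * L ≤ (1 + lam) / L * L := mul_le_mul_of_nonneg_right h1 hL.le
      _ = 1 + lam := by field_simp
  -- nonexpansiveness of the gradient step
  have hstep : ‖x (t + 1) - xstar a‖ ≤ ‖x t - xstar a‖ := by
    have hsub' : ∀ p q, DGDG m n W f a p + ⟪gradG m n W f a p, q - p⟫ ≤ DGDG m n W f a q := by
      intro p q
      have h := hsubG a haIoc.1 haIoc.2 p q
      have hnn : 0 ≤ μ * a / α₀ / 2 * ‖q - p‖ ^ 2 :=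
        mul_nonneg (div_nonneg (div_nonneg (mul_nonneg hμ.le haIoc.1.le) hα₀.le) (by norm_num))
          (sq_nonneg _)
      linarith
    have hco := cocoercive_of_descent hsub' (hdesG a haIoc.1 haL) (x t) (xstar a)
    have hzero := hminz a haIoc
    set u := x t - xstar a with hu
    set d := gradG m n W f a (x t) - gradG m n W f a (xstar a) with hd
    have hrw : x (t + 1) - xstar a = u - d := by
      rw [hiter t, hGrad, hd, hzero, hu]
      abel
    rw [hrw]
    have hsq : ‖u - d‖ ^ 2 ≤ ‖u‖ ^ 2 := by
      rw [norm_sub_sq_real]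
      have hcomm : ⟪d, u⟫ = ⟪u, d⟫ := real_inner_comm u d
      nlinarith [hco]
    nlinarith [norm_nonneg (u - d), norm_nonneg u]
  -- sensitivity of the minimizer
  have hsens : ‖xstar a - xstar b‖ ≤ α₀ * C₁ / (μ * a) * |b - a| := by
    set w := xstar a with hw
    set w' := xstar b with hw'
    have h1 := hsubG a haIoc.1 haIoc.2 w w'
    have h2 := hsubG a haIoc.1 haIoc.2 w' w
    rw [hminz a haIoc] at h1
    have hdiffG : gradG m n W f a w' = (a - b) • gradF m n f w' := by
      have hz := hminz b hbIoc
      rw [gradG] at hz ⊢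
      have : a • gradF m n f w' + (w' - Aop W w')
          = (a - b) • gradF m n f w' + (b • gradF m n f w' + (w' - Aop W w')) := by
        module
      rw [this, hz, add_zero]
    rw [hdiffG] at h2
    have hnorm_rev : ‖w - w'‖ = ‖w' - w‖ := norm_sub_rev _ _
    have hip : ⟪(a - b) • gradF m n f w', w - w'⟫ = (a - b) * ⟪gradF m n f w', w - w'⟫ :=
      real_inner_smul_left _ _ _
    rw [hip] at h2
    have hbound : (b - a) * ⟪gradF m n f w', w - w'⟫ ≤ |b - a| * (C₁ * ‖w - w'‖) := by
      have hcs := abs_real_inner_le_norm (gradF m n f w') (w - w')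
      have hC := hgFC b hbIoc
      calc (b - a) * ⟪gradF m n f w', w - w'⟫
          ≤ |(b - a) * ⟪gradF m n f w', w - w'⟫| := le_abs_self _
        _ = |b - a| * |⟪gradF m n f w', w - w'⟫| := abs_mul _ _
        _ ≤ |b - a| * (‖gradF m n f w'‖ * ‖w - w'‖) :=
            mul_le_mul_of_nonneg_left hcs (abs_nonneg _)
        _ ≤ |b - a| * (C₁ * ‖w - w'‖) := by
            apply mul_le_mul_of_nonneg_left _ (abs_nonneg _)
            exact mul_le_mul_of_nonneg_right hC (norm_nonneg _)
    -- combine h1 and h2 : strong monotonicity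
    have hkey : μ * a / α₀ * ‖w - w'‖ ^ 2 ≤ |b - a| * (C₁ * ‖w - w'‖) := by
      have h0 : ⟪(0 : EuclideanSpace ℝ (Fin m × Fin n)), w' - w⟫ = 0 := inner_zero_left _
      rw [h0] at h1
      have hnn : ‖w' - w‖ ^ 2 = ‖w - w'‖ ^ 2 := by rw [hnorm_rev]
      rw [hnn] at h1
      linarith [h1, h2, hbound]
    rcases eq_or_lt_of_le (norm_nonneg (w - w')) with hz | hz
    · rw [← hz]
      exact mul_nonneg (div_nonneg (mul_nonneg hα₀.le hC₁pos.le)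
        (mul_nonneg hμ.le haIoc.1.le)) (abs_nonneg _)
    · have h5 : μ * a / α₀ * ‖w - w'‖ ≤ |b - a| * C₁ := by
        nlinarith [hkey, hz]
      have h6 := mul_le_mul_of_nonneg_right h5 hα₀.le
      have h7 : μ * a / α₀ * ‖w - w'‖ * α₀ = ‖w - w'‖ * (μ * a) := by
        field_simp
      rw [h7] at h6
      rw [div_mul_eq_mul_div, le_div_iff₀ (mul_pos hμ haIoc.1)]
      calc ‖w - w'‖ * (μ * a) ≤ |b - a| * C₁ * α₀ := h6
        _ = α₀ * C₁ * |b - a| := by ring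
  -- combine
  have htri : ‖x (t + 1) - xstar b‖ ≤ ‖x (t + 1) - xstar a‖ + ‖xstar a - xstar b‖ := by
    have : x (t + 1) - xstar b = (x (t + 1) - xstar a) + (xstar a - xstar b) := by abel
    rw [this]
    exact norm_add_le _ _
  have hcoef2 : α₀ * C₁ / (μ * a) * |b - a| ≤ 2 * α₀ * C₁ / (μ * a) * |b - a| := by
    apply mul_le_mul_of_nonneg_right _ (abs_nonneg _)
    have hq : 0 ≤ α₀ * C₁ / (μ * a) :=
      div_nonneg (mul_nonneg hα₀.le hC₁pos.le) (mul_nonneg hμ.le haIoc.1.le)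
    have h2 : 2 * α₀ * C₁ / (μ * a) = 2 * (α₀ * C₁ / (μ * a)) := by ring
    rw [h2]
    linarith
  calc ‖x (t + 1) - xstar b‖ ≤ ‖x (t + 1) - xstar a‖ + ‖xstar a - xstar b‖ := htri
    _ ≤ ‖x t - xstar a‖ + α₀ * C₁ / (μ * a) * |b - a| := add_le_add hstep hsens
    _ ≤ ‖x t - xstar a‖ + 2 * α₀ * C₁ / (μ * a) * |b - a| := by linarith [hcoef2]
end
end

section
/- Assume G_{α₀} is μ-strongly convex for some α₀ > 0 and μ > 0. Then for all α, β ∈ (0, α₀], the minimizers 𝐱_*^α of G_α and 𝐱_*^β of G_β satisfy (β − α)(F(𝐱_*^α) − F(𝐱_*^β)) ≥ (μβ/(2α₀)) ‖𝐱_*^α − 𝐱_*^β‖². -/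
open Finset Set
open scoped RealInnerProductSpace

noncomputable section

/-- A minimizer of a strongly convex function satisfies the quadratic growth bound. -/
lemma strong_min {E : Type*} [NormedAddCommGroup E] [InnerProductSpace ℝ E]
    {c : ℝ} (hc : 0 ≤ c) {g : E → ℝ} (hg : StrongConvexWith c g)
    {x : E} (hx : ∀ y, g x ≤ g y) (y : E) :
    g x + c / 2 * ‖y - x‖ ^ 2 ≤ g y := by
  have key : ∀ t : ℝ, t ∈ Set.Ioo (0:ℝ) 1 → g x + c / 2 * t * ‖y - x‖ ^ 2 ≤ g y := by
    intro t ht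
    have h1 : (0:ℝ) ≤ t := le_of_lt ht.1
    have h2 : (0:ℝ) ≤ 1 - t := by linarith [ht.2]
    have hcomb := hg.2 (Set.mem_univ x) (Set.mem_univ y) h1 h2 (by ring)
    have hz : ‖t • x + (1 - t) • y‖ ^ 2
        = t^2 * ‖x‖^2 + 2*t*(1-t)*⟪x, y⟫ + (1-t)^2 * ‖y‖^2 := by
      rw [norm_add_sq_real]
      simp [norm_smul, real_inner_smul_left, real_inner_smul_right, abs_of_nonneg h1,
        abs_of_nonneg h2, mul_pow]
      ring
    have hxy : ‖y - x‖ ^ 2 = ‖x‖^2 - 2*⟪x,y⟫ + ‖y‖^2 := by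
      rw [norm_sub_sq_real, real_inner_comm]; ring
    have hmin := hx (t • x + (1 - t) • y)
    simp only [smul_eq_mul] at hcomb
    rw [hz] at hcomb
    have htpos : (0:ℝ) < 1 - t := by linarith [ht.2]
    have step1 : (1 - t) * (g x + c / 2 * t * ‖y - x‖ ^ 2) ≤ (1 - t) * g y := by
      rw [hxy]; nlinarith [hcomb, hmin]
    exact (mul_le_mul_iff_right₀ htpos).mp step1
  set B := c / 2 * ‖y - x‖ ^ 2 with hB
  have hBnn : 0 ≤ B := by positivity
  by_contra hcon
  push_neg at hcon
  have hBpos : 0 < B := by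
    rcases eq_or_lt_of_le hBnn with h | h
    · have := key (1/2) (by norm_num); rw [← h] at hcon; nlinarith
    · exact h
  have hlt : (g y - g x) / B < 1 := by
    rw [div_lt_one hBpos]; linarith
  have hpos : 0 < (g y - g x) / B := by
    have := key (1/2) (by norm_num)
    have : 0 < g y - g x := by nlinarith
    positivity
  obtain ⟨t, ht1, ht2⟩ := exists_between hlt
  have := key t ⟨lt_trans hpos ht1, ht2⟩
  rw [div_lt_iff₀ hBpos] at ht1
  nlinarith

lemma enorm_sq {ι : Type*} [Fintype ι] (x : EuclideanSpace ℝ ι) : ‖x‖^2 = ∑ i, x i ^ 2 := by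
  rw [EuclideanSpace.norm_eq, Real.sq_sqrt (by positivity)]
  simp [sq_abs]

lemma quad_rewrite (m n : ℕ) (W : Matrix (Fin m) (Fin m) ℝ)
    (hWsymm : W.IsSymm) (hWrow : ∀ i, ∑ j, W i j = 1)
    (x : EuclideanSpace ℝ (Fin m × Fin n)) :
    stackedQuad m n W x
      = ∑ k : Fin m, ∑ j : Fin m, (W k j / 4) * ∑ i : Fin n, (x (k, i) - x (j, i))^2 := by
  have hcol : ∀ j, ∑ k, W k j = 1 := by
    intro j
    rw [show (∑ k, W k j) = ∑ k, W j k from Finset.sum_congr rfl fun k _ => (hWsymm.apply k j).symm ▸ rfl]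
    exact hWrow j
  have hN : ‖x‖^2 = ∑ k : Fin m, ∑ i : Fin n, x (k,i)^2 := by
    rw [enorm_sq]; exact Fintype.sum_prod_type _
  have expand : ∀ k j : Fin m, (W k j / 4) * ∑ i : Fin n, (x (k, i) - x (j, i))^2
      = (W k j / 4) * ∑ i, x (k,i)^2 + (W k j / 4) * ∑ i, x (j,i)^2
        - (W k j / 2) * ∑ i, x (k,i) * x (j,i) := by
    intro k j
    rw [show (∑ i : Fin n, (x (k, i) - x (j, i))^2)
        = ∑ i, x (k,i)^2 + ∑ i, x (j,i)^2 - 2 * ∑ i, x (k,i) * x (j,i) by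
      rw [← Finset.sum_add_distrib, Finset.mul_sum, ← Finset.sum_sub_distrib]
      exact Finset.sum_congr rfl fun i _ => by ring]
    ring
  simp only [expand]
  simp only [Finset.sum_sub_distrib, Finset.sum_add_distrib]
  have hA : ∑ k : Fin m, ∑ j : Fin m, (W k j / 4) * ∑ i, x (k,i)^2 = (1/4) * ‖x‖^2 := by
    rw [hN, Finset.mul_sum]
    refine Finset.sum_congr rfl fun k _ => ?_
    rw [← Finset.sum_mul, show (∑ j, W k j / 4) = (∑ j, W k j)/4 by rw [Finset.sum_div], hWrow k]
  have hB : ∑ k : Fin m, ∑ j : Fin m, (W k j / 4) * ∑ i, x (j,i)^2 = (1/4) * ‖x‖^2 := by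
    rw [Finset.sum_comm, hN, Finset.mul_sum]
    refine Finset.sum_congr rfl fun j _ => ?_
    rw [← Finset.sum_mul, show (∑ k, W k j / 4) = (∑ k, W k j)/4 by rw [Finset.sum_div], hcol j]
  have hC : ∑ k : Fin m, ∑ j : Fin m, (W k j / 2) * ∑ i, x (k,i) * x (j,i)
      = (1/2) * ∑ k : Fin m, ∑ j : Fin m, W k j * ∑ i, x (k,i) * x (j,i) := by
    rw [Finset.mul_sum]
    refine Finset.sum_congr rfl fun k _ => ?_
    rw [Finset.mul_sum]
    exact Finset.sum_congr rfl fun j _ => by ring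
  rw [hA, hB, hC, stackedQuad]
  ring

lemma convexOn_finset_sum {E : Type*} [AddCommGroup E] [Module ℝ E] {ι : Type*}
    (s : Finset ι) (g : ι → E → ℝ) (h : ∀ i ∈ s, ConvexOn ℝ Set.univ (g i)) :
    ConvexOn ℝ Set.univ (fun x => ∑ i ∈ s, g i x) := by
  classical
  induction s using Finset.induction with
  | empty => simpa using convexOn_const (0:ℝ) convex_univ
  | insert _ _ hni ih =>
    simp only [Finset.sum_insert hni]
    exact (h _ (Finset.mem_insert_self _ _)).add (ih fun i hi => h i (Finset.mem_insert_of_mem hi))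

lemma quad_convex (m n : ℕ) (W : Matrix (Fin m) (Fin m) ℝ)
    (hWsymm : W.IsSymm) (hWnonneg : ∀ i j, 0 ≤ W i j) (hWrow : ∀ i, ∑ j, W i j = 1) :
    ConvexOn ℝ Set.univ (stackedQuad m n W) := by
  have h : ConvexOn ℝ Set.univ (fun x : EuclideanSpace ℝ (Fin m × Fin n) =>
      ∑ k : Fin m, ∑ j : Fin m, (W k j / 4) * ∑ i : Fin n, (x (k, i) - x (j, i))^2) := by
    refine convexOn_finset_sum _ _ fun k _ => convexOn_finset_sum _ _ fun j _ => ?_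
    have hsq : ConvexOn ℝ Set.univ (fun x : EuclideanSpace ℝ (Fin m × Fin n) =>
        ∑ i : Fin n, (x (k, i) - x (j, i))^2) := by
      refine convexOn_finset_sum _ _ fun i _ => ?_
      refine ⟨convex_univ, fun x _ y _ a b ha hb hab => ?_⟩
      simp only [PiLp.add_apply, PiLp.smul_apply, smul_eq_mul]
      nlinarith [sq_nonneg ((x (k,i) - x (j,i)) - (y (k,i) - y (j,i))), mul_nonneg ha hb]
    have := hsq.smul (c := W k j / 4) (div_nonneg (hWnonneg k j) (by norm_num))
    simpa [smul_eq_mul] using this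
  have heq : stackedQuad m n W = fun x : EuclideanSpace ℝ (Fin m × Fin n) =>
      ∑ k : Fin m, ∑ j : Fin m, (W k j / 4) * ∑ i : Fin n, (x (k, i) - x (j, i))^2 := by
    funext x; exact quad_rewrite m n W hWsymm hWrow x
  rw [heq]; exact h

/-- If `G_{α₀}` is `μ`-strongly convex, then for all `α, β ∈ (0, α₀]` the
minimizers satisfy `(β − α)(F(𝐱_*^α) − F(𝐱_*^β)) ≥ (μβ/(2α₀))‖𝐱_*^α − 𝐱_*^β‖²`. -/
theorem dgd_minimizers_monotonicity {m n : ℕ} (hm : 1 ≤ m) (hn : 1 ≤ n)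
    (W : Matrix (Fin m) (Fin m) ℝ)
    (hWsymm : W.IsSymm)
    (hWnonneg : ∀ i j, 0 ≤ W i j)
    (hWrow : ∀ i, ∑ j, W i j = 1)
    (hWdiag : ∀ i, 0 < W i i)
    (f : Fin m → EuclideanSpace ℝ (Fin n) → ℝ)
    (hdiff : ∀ k, Differentiable ℝ (f k))
    (μ α₀ : ℝ) (hμ : 0 < μ) (hα₀ : 0 < α₀)
    (hGsc : StrongConvexWith μ (DGDG m n W f α₀))
    (xstar : ℝ → EuclideanSpace ℝ (Fin m × Fin n))
    (hmin : ∀ a ∈ Set.Ioc (0 : ℝ) α₀, ∀ y, DGDG m n W f a (xstar a) ≤ DGDG m n W f a y) :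
    ∀ α ∈ Set.Ioc (0 : ℝ) α₀, ∀ β ∈ Set.Ioc (0 : ℝ) α₀,
      (μ * β / (2 * α₀)) * ‖xstar α - xstar β‖ ^ 2
        ≤ (β - α) * (stackedF m n f (xstar α) - stackedF m n f (xstar β)) := by
  have hQconv := quad_convex m n W hWsymm hWnonneg hWrow
  -- strong convexity of `G_a` for `a ∈ (0, α₀]`
  have hsc : ∀ a ∈ Set.Ioc (0 : ℝ) α₀, StrongConvexWith (μ * a / α₀) (DGDG m n W f a) := by
    intro a ha
    have h1 : (0:ℝ) ≤ a / α₀ := div_nonneg ha.1.le hα₀.le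
    have h2 : (0:ℝ) ≤ 1 - a / α₀ := by
      have : a / α₀ ≤ 1 := (div_le_one hα₀).mpr ha.2
      linarith
    have h12 := (hGsc.smul h1).add (hQconv.smul h2)
    have heq : (fun x : EuclideanSpace ℝ (Fin m × Fin n) =>
          DGDG m n W f a x - (μ * a / α₀) / 2 * ‖x‖ ^ 2)
        = ((fun x => (a / α₀) • (DGDG m n W f α₀ x - μ / 2 * ‖x‖ ^ 2))
            + fun x => (1 - a / α₀) • stackedQuad m n W x) := by
      funext x
      simp only [Pi.add_apply, smul_eq_mul, DGDG]
      field_simp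
      ring
    show ConvexOn ℝ Set.univ (fun x : EuclideanSpace ℝ (Fin m × Fin n) =>
      DGDG m n W f a x - (μ * a / α₀) / 2 * ‖x‖ ^ 2)
    rw [heq]; exact h12
  intro α hα β hβ
  have hkα := strong_min (c := μ * α / α₀)
    (div_nonneg (mul_nonneg hμ.le hα.1.le) hα₀.le) (hsc α hα) (hmin α hα) (xstar β)
  have hkβ := strong_min (c := μ * β / α₀)
    (div_nonneg (mul_nonneg hμ.le hβ.1.le) hα₀.le) (hsc β hβ) (hmin β hβ) (xstar α)
  rw [norm_sub_rev] at hkα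
  simp only [DGDG] at hkα hkβ
  have h3 : 0 ≤ (μ * α / α₀) / 2 * ‖xstar α - xstar β‖ ^ 2 :=
    mul_nonneg (by exact div_nonneg (div_nonneg (mul_nonneg hμ.le hα.1.le) hα₀.le) two_pos.le) (sq_nonneg _)
  have hco : μ * β / (2 * α₀) = μ * β / α₀ / 2 := by ring
  rw [hco]
  nlinarith [hkα, hkβ, h3]
end
end
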